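/- arXiv:1011.3439 — 5 statements merged into one kernel-verified Lean document; each statement's English description precedes it below -/
import Mathlib

section
/- Let V be a Lorentzian vector space with null vectors p, q, g(p,q) = 1, and E = span{p,q}^⊥. For a symmetric endomorphism T of E, define R^T : V × V → so(V) by R^T(x, q) = −p ∧ T(x) for x ∈ E, R^T(p, ·) = 0, R^T(x, y) = 0 for x, y ∈ E, extended bilinearly and antisymmetrically. Then R^T satisfies the first Bianchi identity: R^T(u,v)w + R^T(v,w)u + R^T(w,u)v = 0 for all u, v, w ∈ V. -/
/-- The bivector `x ∧ y` regarded as an endomorphism of `V`: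
`(x ∧ y) z = g(x,z) y − g(y,z) x`. -/
def wedge {V : Type*} [AddCommGroup V] [Module ℝ V]
    (g : LinearMap.BilinForm ℝ V) (x y : V) : Module.End ℝ V :=
  (g x).smulRight y - (g y).smulRight x

/-- The subspace `E = (span{p,q})^⊥ = ker g(p,·) ∩ ker g(q,·)`. -/
def Esub {V : Type*} [AddCommGroup V] [Module ℝ V]
    (g : LinearMap.BilinForm ℝ V) (p q : V) : Submodule ℝ V :=
  LinearMap.ker (g p) ⊓ LinearMap.ker (g q)

/-- The algebraic curvature tensor `R^T` determined by a symmetric endomorphism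
`T` of `E` (extended to `V` by `T p = T q = 0`):
`R^T(u,v) = p ∧ (g(p,u)·T v − g(p,v)·T u)`, so that `R^T(x,q) = −p∧T(x)` for
`x ∈ E`, `R^T(p,·) = 0` and `R^T` vanishes on `E × E`. -/
def RT {V : Type*} [AddCommGroup V] [Module ℝ V]
    (g : LinearMap.BilinForm ℝ V) (p : V) (T : Module.End ℝ V) (u v : V) :
    Module.End ℝ V :=
  wedge g p ((g p u) • T v - (g p v) • T u)

/-- `R^T` satisfies the first Bianchi identity. -/
theorem stmt_7 {V : Type*} [AddCommGroup V] [Module ℝ V] [FiniteDimensional ℝ V]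
    (g : LinearMap.BilinForm ℝ V) (hsymm : ∀ x y : V, g x y = g y x)
    (p q : V) (hp : g p p = 0) (hq : g q q = 0) (hpq : g p q = 1)
    (T : Module.End ℝ V) (hTp : T p = 0) (hTq : T q = 0)
    (hTsym : ∀ x y : V, g (T x) y = g x (T y)) :
    ∀ u v w : V,
      (RT g p T u v) w + (RT g p T v w) u + (RT g p T w u) v = 0 := by
  intro u v w
  have hs : ∀ x y : V, g (T x) y = g (T y) x := fun x y => by
    rw [hTsym, hsymm]
  simp only [RT, wedge, LinearMap.sub_apply, LinearMap.smulRight_apply,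
    map_sub, map_smul, LinearMap.sub_apply, LinearMap.smul_apply,
    smul_sub, smul_smul, sub_smul, smul_eq_mul]
  rw [hs v w, hs u w, hs u v]
  module
end

section
/- Let V, g, p, q, E be the standard Lorentzian setup. The map T ↦ R^T is a linear isomorphism from the space S²E of symmetric endomorphisms of E onto the space R(p∧E) of algebraic curvature tensors with values in the abelian subalgebra p∧E, where R(p∧E) = {R : Λ²V → p∧E linear | R satisfies the first Bianchi identity}. -/
/-- `T` belongs to `S²E`: it kills `p` and `q` and is `g`-symmetric. -/
def MemS2E {V : Type*} [AddCommGroup V] [Module ℝ V]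
    (g : LinearMap.BilinForm ℝ V) (p q : V) (T : Module.End ℝ V) : Prop :=
  T p = 0 ∧ T q = 0 ∧ ∀ x y : V, g (T x) y = g x (T y)

section Aux
variable {V : Type*} [AddCommGroup V] [Module ℝ V]

lemma wedge_apply (g : LinearMap.BilinForm ℝ V) (x y z : V) :
    wedge g x y z = g x z • y - g y z • x := rfl
lemma wedge_neg (g : LinearMap.BilinForm ℝ V) (x y : V) : wedge g x (-y) = -(wedge g x y) := by
  ext z; simp [wedge_apply, smul_neg, neg_smul]; abel
lemma wedge_zero (g : LinearMap.BilinForm ℝ V) (x : V) : wedge g x 0 = 0 := by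
  ext z; simp [wedge_apply]
lemma mem_Esub {g : LinearMap.BilinForm ℝ V} {p q x : V} :
    x ∈ Esub g p q ↔ g p x = 0 ∧ g q x = 0 := by
  simp [Esub, Submodule.mem_inf, LinearMap.mem_ker]

lemma expand_lin {W : Type*} [AddCommGroup W] [Module ℝ W] (f : V → W)
    (hf : ∀ (c : ℝ) (u u' : V), f (c • u + u') = c • f u + f u') :
    (f 0 = 0) ∧ (∀ x y, f (x + y) = f x + f y) ∧ (∀ (c : ℝ) x, f (c • x) = c • f x) := by
  have h0 : f 0 = 0 := by
    have h := hf 1 0 0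
    simp at h
    exact h
  have hadd : ∀ x y, f (x + y) = f x + f y := fun x y => by simpa using hf 1 x y
  have hsmul : ∀ (c : ℝ) x, f (c • x) = c • f x := fun c x => by simpa [h0] using hf c x 0
  exact ⟨h0, hadd, hsmul⟩

end Aux

/-- `T ↦ R^T` is a linear isomorphism from `S²E` onto the space
`R(p∧E)` of algebraic curvature tensors with values in `p∧E`: it is additive,
homogeneous, injective on `S²E`, and surjective onto the space of bilinear
alternating maps with values in `p∧E` satisfying the first Bianchi identity. -/
theorem stmt_8 {V : Type*} [AddCommGroup V] [Module ℝ V] [FiniteDimensional ℝ V]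
    (g : LinearMap.BilinForm ℝ V) (hsymm : ∀ x y : V, g x y = g y x)
    (hnondeg : ∀ x : V, (∀ y : V, g x y = 0) → x = 0)
    (p q : V) (hp : g p p = 0) (hq : g q q = 0) (hpq : g p q = 1)
    (hEpos : ∀ x ∈ Esub g p q, x ≠ 0 → 0 < g x x)
    (hdecomp : ∀ u : V, ∃ α β : ℝ, ∃ e ∈ Esub g p q, u = α • p + e + β • q) :
    (∀ T₁ T₂ : Module.End ℝ V, ∀ u v : V,
      RT g p (T₁ + T₂) u v = RT g p T₁ u v + RT g p T₂ u v) ∧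
    (∀ (c : ℝ) (T : Module.End ℝ V), ∀ u v : V,
      RT g p (c • T) u v = c • RT g p T u v) ∧
    (∀ T₁ T₂ : Module.End ℝ V, MemS2E g p q T₁ → MemS2E g p q T₂ →
      (∀ u v : V, RT g p T₁ u v = RT g p T₂ u v) → T₁ = T₂) ∧
    (∀ R : V → V → Module.End ℝ V,
      (∀ (c : ℝ) (u u' v : V), R (c • u + u') v = c • R u v + R u' v) →
      (∀ (c : ℝ) (u v v' : V), R u (c • v + v') = c • R u v + R u v') →
      (∀ u : V, R u u = 0) →
      (∀ u v : V, ∃ e ∈ Esub g p q, R u v = wedge g p e) →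
      (∀ u v w : V, (R u v) w + (R v w) u + (R w u) v = 0) →
      ∃ T : Module.End ℝ V, MemS2E g p q T ∧ ∀ u v : V, R u v = RT g p T u v) := by
  refine ⟨?_, ?_, ?_, ?_⟩
  · intro T₁ T₂ u v
    ext w
    simp [RT, wedge_apply, smul_add, map_add, map_sub, map_smul, smul_sub, smul_smul]
    module
  · intro c T u v
    ext w
    simp [RT, wedge_apply, smul_add, map_add, map_sub, map_smul, smul_sub, smul_smul]
    module
  · intro T₁ T₂ h1 h2 hRR
    obtain ⟨h1p, h1q, h1s⟩ := h1
    obtain ⟨h2p, h2q, h2s⟩ := h2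
    have key : ∀ e ∈ Esub g p q, T₁ e = T₂ e := by
      intro e he
      obtain ⟨hpe, hqe⟩ := mem_Esub.mp he
      have h := congrArg (fun A : Module.End ℝ V => A q) (hRR q e)
      simp only [RT, wedge_apply, hpq, hpe, one_smul, zero_smul, sub_zero, h1q, h2q] at h
      -- h : g p q • (T₁ e) - g (T₁ e) q • p = ...
      have e1 : g (T₁ e) q = 0 := by rw [h1s e q, h1q]; simp
      have e2 : g (T₂ e) q = 0 := by rw [h2s e q, h2q]; simp
      simpa [wedge_apply, hpq, e1, e2] using h
    ext u
    obtain ⟨α, β, e, he, rfl⟩ := hdecomp u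
    simp [map_add, map_smul, h1p, h1q, h2p, h2q, key e he]
  · intro R hR1 hR2 halt hval hB
    have hqp : g q p = 1 := by rw [hsymm]; exact hpq
    -- linearity packages
    obtain ⟨hz2, hadd2, hsmul2⟩ : _ ∧ _ ∧ _ := by
      refine ⟨fun u => (expand_lin (R u) (hR2 · u · ·)).1,
        fun u => (expand_lin (R u) (hR2 · u · ·)).2.1,
        fun u => (expand_lin (R u) (hR2 · u · ·)).2.2⟩
    obtain ⟨hz1, hadd1, hsmul1⟩ : _ ∧ _ ∧ _ := by
      refine ⟨fun v => (expand_lin (R · v) (fun c u u' => hR1 c u u' v)).1,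
        fun v => (expand_lin (R · v) (fun c u u' => hR1 c u u' v)).2.1,
        fun v => (expand_lin (R · v) (fun c u u' => hR1 c u u' v)).2.2⟩
    have hanti : ∀ u v, R v u = - R u v := by
      intro u v
      have h : R u v + R v u = 0 := by
        have h0 := halt (u + v)
        rw [hadd1, hadd2, hadd2, halt, halt] at h0
        -- 0 + R u v + (R v u + 0) = 0
        simpa using h0
      exact eq_neg_of_add_eq_zero_right h

    -- define T v = R q v q
    set T : Module.End ℝ V := {
      toFun := fun v => R q v q
      map_add' := fun v v' => by simp [hadd2]
      map_smul' := fun c v => by simp [hsmul2] } with hTdef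
    have hT : ∀ v, T v = R q v q := fun _ => rfl
    have hwq : ∀ e ∈ Esub g p q, wedge g p e q = e := by
      intro e he; obtain ⟨hpe, hqe⟩ := mem_Esub.mp he
      rw [wedge_apply, hpq, hsymm e q, hqe]; simp
    have hwp : ∀ e ∈ Esub g p q, wedge g p e p = 0 := by
      intro e he; obtain ⟨hpe, hqe⟩ := mem_Esub.mp he
      rw [wedge_apply, hp, hsymm e p, hpe]; simp
    have hwe : ∀ e ∈ Esub g p q, ∀ x, g p x = 0 → wedge g p e x = -(g e x) • p := by
      intro e he x hx; rw [wedge_apply, hx]; simp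
    have hRq : ∀ v : V, T v ∈ Esub g p q ∧ R q v = wedge g p (T v) := by
      intro v
      obtain ⟨e, he, hre⟩ := hval q v
      have hTe : T v = e := by rw [hT, hre]; exact hwq e he
      rw [hTe]; exact ⟨he, hre⟩
    have hTq : T q = 0 := by rw [hT, halt]; rfl
    have hReqp : ∀ e ∈ Esub g p q, R e q p = 0 := by
      intro e he
      rw [hanti q e, LinearMap.neg_apply, (hRq e).2, hwp (T e) (hRq e).1, neg_zero]
    have hTp : T p = 0 := by
      have hz := (hRq p).1
      have hze : ∀ e ∈ Esub g p q, g (T p) e = 0 := by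
        intro e he
        obtain ⟨hpe, hqe⟩ := mem_Esub.mp he
        obtain ⟨x, hx, hpex⟩ := hval p e
        have hb := hB q p e
        have h1 : R q p e = -(g (T p) e) • p := by
          rw [(hRq p).2, hwe (T p) hz e hpe]
        have h2 : R p e q = x := by rw [hpex]; exact hwq x hx
        have h3 : R e q p = 0 := hReqp e he
        rw [h1, h2, h3, add_zero] at hb
        have hgb := congrArg (g q) hb
        simp [map_add, map_smul, hqp, (mem_Esub.mp hx).2, smul_eq_mul] at hgb
        linarith [hgb]
      by_contra hne
      have hpos := hEpos (T p) hz hne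
      rw [hze (T p) hz] at hpos
      exact lt_irrefl 0 hpos
    have hRqp : R q p = 0 := by rw [(hRq p).2, hTp, wedge_zero]
    have hTsym : ∀ x y : V, g (T x) y = g x (T y) := by
      intro x y
      obtain ⟨e, he, hxy⟩ := hval x y
      have hb := hB q x y
      have h2 : R x y q = e := by rw [hxy]; exact hwq e he
      have h3 : R y q x = -(R q y x) := by rw [hanti q y]; rfl
      rw [h2, h3, (hRq x).2, (hRq y).2, wedge_apply, wedge_apply] at hb
      obtain ⟨hpx', hqx'⟩ := mem_Esub.mp (hRq x).1
      obtain ⟨hpy', hqy'⟩ := mem_Esub.mp (hRq y).1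
      obtain ⟨hpe, hqe⟩ := mem_Esub.mp he
      have hgb := congrArg (g q) hb
      simp [map_add, map_sub, map_smul, hqp, hqe, hqx', hqy', smul_eq_mul] at hgb
      rw [hsymm x (T y)]
      linarith [hgb]
    have hRpe : ∀ e ∈ Esub g p q, R p e = 0 := by
      intro e he
      obtain ⟨x, hx, hpex⟩ := hval p e
      have hb := hB q p e
      rw [hRqp, hReqp e he] at hb
      simp at hb
      have hx0 : x = 0 := by rw [← hwq x hx, ← hpex]; exact hb
      rw [hpex, hx0, wedge_zero]
    have hRpq : R p q = 0 := by rw [hanti q p, hRqp, neg_zero]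
    have hRp : ∀ v, R p v = 0 := by
      intro v
      obtain ⟨α, β, e, he, rfl⟩ := hdecomp v
      rw [hadd2, hadd2, hsmul2, hsmul2, halt, hRpe e he, hRpq]
      simp
    have hRee : ∀ e ∈ Esub g p q, ∀ e' ∈ Esub g p q, R e e' = 0 := by
      intro e he e' he'
      obtain ⟨hpe, hqe⟩ := mem_Esub.mp he
      obtain ⟨hpe', hqe'⟩ := mem_Esub.mp he'
      obtain ⟨x, hx, hee⟩ := hval e e'
      have hb := hB e e' q
      have h1 : R e e' q = x := by rw [hee]; exact hwq x hx
      have h2 : R e' q e = g (T e') e • p := by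
        rw [hanti q e', LinearMap.neg_apply, (hRq e').2, hwe (T e') (hRq e').1 e hpe]
        simp
      have h3 : R q e e' = -(g (T e) e') • p := by
        rw [(hRq e).2, hwe (T e) (hRq e).1 e' hpe']
      rw [h1, h2, h3] at hb
      have hg : g (T e') e = g (T e) e' := by rw [hTsym e' e, hsymm e' (T e)]
      rw [hg] at hb
      have hx0 : x = 0 := by simpa using hb
      rw [hee, hx0, wedge_zero]
    refine ⟨T, ⟨hTp, hTq, hTsym⟩, ?_⟩
    set S : V → V → Module.End ℝ V := fun u v => R u v - RT g p T u v with hS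
    have hS1 : ∀ (c : ℝ) (u u' v : V), S (c • u + u') v = c • S u v + S u' v := by
      intro c u u' v
      simp only [hS]
      rw [hR1]
      have hrt : RT g p T (c • u + u') v = c • RT g p T u v + RT g p T u' v := by
        ext w
        simp [RT, wedge_apply, map_add, map_smul, smul_sub, smul_smul, add_smul]
        module
      rw [hrt]
      module
    have hS2 : ∀ (c : ℝ) (u v v' : V), S u (c • v + v') = c • S u v + S u v' := by
      intro c u v v'
      simp only [hS]
      rw [hR2]
      have hrt : RT g p T u (c • v + v') = c • RT g p T u v + RT g p T u v' := by
        ext w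
        simp [RT, wedge_apply, map_add, map_smul, smul_sub, smul_smul, add_smul]
        module
      rw [hrt]
      module
    have hSqe : ∀ e ∈ Esub g p q, S q e = 0 := by
      intro e he
      obtain ⟨hpe, hqe⟩ := mem_Esub.mp he
      simp only [hS]
      rw [(hRq e).2]
      simp [RT, hpq, hpe, hTq]
    have hSp : ∀ v, S p v = 0 := by
      intro v
      simp only [hS]
      rw [hRp v]
      simp [RT, hp, hTp, wedge_zero]
    have hSq : ∀ v, S q v = 0 := by
      intro v
      obtain ⟨α, β, e, he, rfl⟩ := hdecomp v
      obtain ⟨f0, fadd, fsmul⟩ := expand_lin (S q) (hS2 · q · ·)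
      rw [fadd, fadd, fsmul, fsmul]
      have h1 : S q p = 0 := by
        simp only [hS]; rw [hRqp]; simp [RT, hp, hTp, hTq, wedge_zero]
      have h2 : S q q = 0 := by
        simp only [hS]; rw [halt]; simp [RT, wedge_zero]
      rw [h1, h2, hSqe e he]; simp
    have hSe : ∀ e ∈ Esub g p q, ∀ v, S e v = 0 := by
      intro e he v
      obtain ⟨hpe, hqe⟩ := mem_Esub.mp he
      obtain ⟨α, β, e', he', rfl⟩ := hdecomp v
      obtain ⟨f0, fadd, fsmul⟩ := expand_lin (S e) (hS2 · e · ·)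
      rw [fadd, fadd, fsmul, fsmul]
      have h1 : S e p = 0 := by
        simp only [hS]
        rw [hanti p e, hRp e]
        simp [RT, hp, hpe, hTp, wedge_zero]
      have h2 : S e e' = 0 := by
        obtain ⟨hpe', hqe'⟩ := mem_Esub.mp he'
        simp only [hS]
        rw [hRee e he e' he']
        simp [RT, hpe, hpe', wedge_zero]
      have h3 : S e q = 0 := by
        simp only [hS]
        rw [hanti q e, (hRq e).2]
        simp only [RT, hpe, hpq, hTq, zero_smul, one_smul, zero_sub, smul_zero, sub_zero]
        rw [wedge_neg]
        abel
      rw [h1, h2, h3]; simp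
    intro u v
    have hfin : S u v = 0 := by
      obtain ⟨α, β, e, he, rfl⟩ := hdecomp u
      obtain ⟨f0, fadd, fsmul⟩ := expand_lin (S · v) (fun c x x' => hS1 c x x' v)
      rw [fadd, fadd, fsmul, fsmul, hSp v, hSq v, hSe e he v]; simp
    simp only [hS] at hfin
    exact sub_eq_zero.mp hfin
end

section
/- Let g = h ⊕ (p∧E) with h ⊆ so(E) irreducible, and let S ∈ ∇R(g) be annihilated by g, with S_v = R^{(P_v, R⁰_v, T_v)} in the standard parametrization. Then for every x ∈ E, S_x = 0 and S_p = 0; i.e., S is determined entirely by S_q. -/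
attribute [local instance 100] LieRing.ofAssociativeRing

/-- Membership in `𝔤 = 𝔥 ⊕ (p∧E)`. -/
def InGAlg {V : Type*} [AddCommGroup V] [Module ℝ V]
    (g : LinearMap.BilinForm ℝ V) (p q : V)
    (𝔥 : LieSubalgebra ℝ (Module.End ℝ V)) (A : Module.End ℝ V) : Prop :=
  ∃ B ∈ 𝔥, ∃ e ∈ Esub g p q, A = B + wedge g p e

/-- `S : V → R(𝔤)` belongs to `∇R(𝔤)`: `S` is linear, each `S_u` is an algebraic
curvature tensor with values in `𝔤 = 𝔥 ⊕ (p∧E)` (bilinear, alternating, first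
Bianchi identity), and `S` satisfies the second Bianchi identity. -/
def MemNablaR {V : Type*} [AddCommGroup V] [Module ℝ V]
    (g : LinearMap.BilinForm ℝ V) (p q : V)
    (𝔥 : LieSubalgebra ℝ (Module.End ℝ V))
    (S : V → V → V → Module.End ℝ V) : Prop :=
  (∀ (c : ℝ) (u u' v w : V), S (c • u + u') v w = c • S u v w + S u' v w) ∧
  (∀ (c : ℝ) (u v v' w : V), S u (c • v + v') w = c • S u v w + S u v' w) ∧
  (∀ (c : ℝ) (u v w w' : V), S u v (c • w + w') = c • S u v w + S u v w') ∧
  (∀ u v : V, S u v v = 0) ∧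
  (∀ u v w : V, InGAlg g p q 𝔥 (S u v w)) ∧
  (∀ u v w x : V, (S u v w) x + (S u w x) v + (S u x v) w = 0) ∧
  (∀ u v w : V, S u v w + S v w u + S w u v = 0)

/-- `S` is annihilated by `𝔤` under the natural action on `V* ⊗ Λ²V* ⊗ 𝔤`. -/
def Annihilated {V : Type*} [AddCommGroup V] [Module ℝ V]
    (g : LinearMap.BilinForm ℝ V) (p q : V)
    (𝔥 : LieSubalgebra ℝ (Module.End ℝ V))
    (S : V → V → V → Module.End ℝ V) : Prop :=
  ∀ A : Module.End ℝ V, InGAlg g p q 𝔥 A →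
    ∀ v₁ v₂ v₃ : V,
      ⁅A, S v₃ v₁ v₂⁆ - S (A v₃) v₁ v₂ - S v₃ (A v₁) v₂ - S v₃ v₁ (A v₂) = 0

/-- The tensor `S = q' ⊗ R^{Id_E}`, where `q' = g(p,·)` and
`R^{Id_E}(v,w) = p ∧ ((v∧w)p)`. -/
def Szero {V : Type*} [AddCommGroup V] [Module ℝ V]
    (g : LinearMap.BilinForm ℝ V) (p : V) : V → V → V → Module.End ℝ V :=
  fun u v w => (g p u) • wedge g p ((wedge g v w) p)

/-- For `𝔤 = 𝔥 ⊕ (p∧E)` with `𝔥 ⊆ so(E)` irreducible, any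
`S ∈ ∇R(𝔤)` annihilated by `𝔤` satisfies `S_p = 0` and `S_x = 0` for all
`x ∈ E`; i.e. `S` is determined entirely by `S_q`. -/
theorem stmt_10 {V : Type*} [AddCommGroup V] [Module ℝ V] [FiniteDimensional ℝ V]
    (g : LinearMap.BilinForm ℝ V) (hsymm : ∀ x y : V, g x y = g y x)
    (hnondeg : ∀ x : V, (∀ y : V, g x y = 0) → x = 0)
    (p q : V) (hp : g p p = 0) (hq : g q q = 0) (hpq : g p q = 1)
    (hEpos : ∀ x ∈ Esub g p q, x ≠ 0 → 0 < g x x)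
    (hEne : Esub g p q ≠ ⊥)
    (hdecomp : ∀ u : V, ∃ α β : ℝ, ∃ e ∈ Esub g p q, u = α • p + e + β • q)
    (𝔥 : LieSubalgebra ℝ (Module.End ℝ V))
    (hskew : ∀ B ∈ 𝔥, ∀ x y : V, g (B x) y = - g x (B y))
    (hBp : ∀ B ∈ 𝔥, B p = 0) (hBq : ∀ B ∈ 𝔥, B q = 0)
    (hirr : ∀ W : Submodule ℝ V, W ≤ Esub g p q →
      (∀ B ∈ 𝔥, ∀ x ∈ W, B x ∈ W) → W = ⊥ ∨ W = Esub g p q)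
    (S : V → V → V → Module.End ℝ V)
    (hS : MemNablaR g p q 𝔥 S) (hann : Annihilated g p q 𝔥 S) :
    (∀ v w : V, S p v w = 0) ∧
    (∀ x ∈ Esub g p q, ∀ v w : V, S x v w = 0) := by
  obtain ⟨hS1, hS2, hS3, hSalt, hSg, hB1, hB2⟩ := hS
  have wap : ∀ x y z : V, (wedge g x y) z = g x z • y - g y z • x := by
    intro x y z
    simp [wedge]
  have memE : ∀ e ∈ Esub g p q, g p e = 0 ∧ g q e = 0 := by
    intro e he
    rw [Esub, Submodule.mem_inf] at he
    exact ⟨LinearMap.mem_ker.mp he.1, LinearMap.mem_ker.mp he.2⟩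
  have gsymm0 : ∀ e ∈ Esub g p q, g e p = 0 ∧ g e q = 0 := by
    intro e he
    rw [hsymm e p, hsymm e q]
    exact memE e he
  -- linearity consequences
  have S1z : ∀ v w, S (0:V) v w = 0 := by
    intro v w
    have h := hS1 1 0 0 v w
    simp only [one_smul, add_zero, zero_add] at h
    nth_rewrite 1 [← add_zero (S 0 v w)] at h
    exact (add_left_cancel h).symm
  have S2z : ∀ u w, S u (0:V) w = 0 := by
    intro u w
    have h := hS2 1 u 0 0 w
    simp only [one_smul, add_zero, zero_add] at h
    nth_rewrite 1 [← add_zero (S u 0 w)] at h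
    exact (add_left_cancel h).symm
  have S3z : ∀ u v, S u v (0:V) = 0 := by
    intro u v
    have h := hS3 1 u v 0 0
    simp only [one_smul, add_zero, zero_add] at h
    nth_rewrite 1 [← add_zero (S u v 0)] at h
    exact (add_left_cancel h).symm
  have Ssm1 : ∀ (c:ℝ) u v w, S (c • u) v w = c • S u v w := by
    intro c u v w
    have h := hS1 c u 0 v w
    simpa [S1z] using h
  have Ssm2 : ∀ (c:ℝ) u v w, S u (c • v) w = c • S u v w := by
    intro c u v w
    have h := hS2 c u v 0 w
    simpa [S2z] using h
  have Ssm3 : ∀ (c:ℝ) u v w, S u v (c • w) = c • S u v w := by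
    intro c u v w
    have h := hS3 c u v w 0
    simpa [S3z] using h
  have Sad2 : ∀ u a b w, S u (a + b) w = S u a w + S u b w := by
    intro u a b w
    have h := hS2 1 u a b w
    simpa using h
  have Sad3 : ∀ u v a b, S u v (a + b) = S u v a + S u v b := by
    intro u v a b
    have h := hS3 1 u v a b
    simpa using h
  have Sswap : ∀ u v w, S u v w = - S u w v := by
    intro u v w
    have h : S u (v + w) (v + w) = 0 := hSalt u (v + w)
    rw [Sad2, Sad3, Sad3, hSalt, hSalt] at h
    simp only [zero_add, add_zero] at h
    exact eq_neg_of_add_eq_zero_left h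
  -- values in 𝔤
  have val_p : ∀ u v w, (S u v w) p = 0 := by
    intro u v w
    obtain ⟨B, hB, e, he, hAe⟩ := hSg u v w
    rw [hAe]
    simp [LinearMap.add_apply, wap, hBp B hB, hp, (gsymm0 e he).1]
  have val_skew : ∀ u v w a b, g ((S u v w) a) b = - g a ((S u v w) b) := by
    intro u v w a b
    obtain ⟨B, hB, e, he, hAe⟩ := hSg u v w
    rw [hAe]
    simp only [LinearMap.add_apply, wap, map_add, map_sub, map_smul,
      LinearMap.add_apply, LinearMap.sub_apply, LinearMap.smul_apply, smul_eq_mul]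
    rw [hskew B hB a b, hsymm a e, hsymm a p]
    ring
  have val_qmem : ∀ u v w, (S u v w) q ∈ Esub g p q := by
    intro u v w
    obtain ⟨B, hB, e, he, hAe⟩ := hSg u v w
    have hq' : (S u v w) q = e := by
      rw [hAe]
      simp [LinearMap.add_apply, wap, hBq B hB, hpq, (gsymm0 e he).2]
    rw [hq']
    exact he
  -- pair symmetry
  have sk34 : ∀ a u v w t, g ((S a u v) w) t = - g ((S a u v) t) w := by
    intro a u v w t
    rw [val_skew a u v w t, hsymm w ((S a u v) t)]
  have sk12 : ∀ a u v w t, g ((S a u v) w) t = - g ((S a v u) w) t := by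
    intro a u v w t
    rw [Sswap a u v]
    simp
  have bianchi4 : ∀ a u v w t,
      g ((S a u v) w) t + g ((S a v w) u) t + g ((S a w u) v) t = 0 := by
    intro a u v w t
    have h := congrArg (fun z => g z t) (hB1 a u v w)
    simpa using h
  have pair : ∀ a u v w t, g ((S a u v) w) t = g ((S a w t) u) v := by
    intro a u v w t
    have h1 := bianchi4 a u v w t
    have h2 := bianchi4 a v w t u
    have h3 := bianchi4 a w t u v
    have h4 := bianchi4 a t u v w
    have e1 : g ((S a v w) t) u = - g ((S a v w) u) t := sk34 a v w t u
    have e2 : g ((S a w t) v) u = - g ((S a w t) u) v := sk34 a w t v u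
    have e3 : g ((S a t v) w) u = g ((S a v t) u) w := by
      rw [sk12 a t v w u, sk34 a v t w u]; ring
    have e4 : g ((S a t u) w) v = - g ((S a t u) v) w := sk34 a t u w v
    have e5 : g ((S a u w) t) v = g ((S a w u) v) t := by
      rw [sk12 a u w t v, sk34 a w u t v]; ring
    have e6 : g ((S a u v) t) w = - g ((S a u v) w) t := sk34 a u v t w
    linarith
  have Sp2 : ∀ a v, S a p v = 0 := by
    intro a v
    apply LinearMap.ext; intro w
    simp only [LinearMap.zero_apply]
    apply hnondeg
    intro t
    have h := pair a p v w t
    rw [val_p a w t] at h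
    simpa using h
  have Sp3 : ∀ a v, S a v p = 0 := by
    intro a v
    rw [Sswap a v p, Sp2 a v, neg_zero]
  have Sp1 : ∀ v w, S p v w = 0 := by
    intro v w
    have h := hB2 p v w
    rw [Sp3 v w, Sp2 w v] at h
    simpa using h
  -- wedge facts
  have Wp : ∀ e ∈ Esub g p q, (wedge g p e) p = 0 := by
    intro e he
    rw [wap, hp, (gsymm0 e he).1]
    simp
  have Wq : ∀ e ∈ Esub g p q, (wedge g p e) q = e := by
    intro e he
    rw [wap, hpq, (gsymm0 e he).2]
    simp
  have Wx : ∀ e ∈ Esub g p q, ∀ x ∈ Esub g p q, (wedge g p e) x = -(g e x) • p := by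
    intro e he x hx
    rw [wap, (memE x hx).1]
    simp
  have WinG : ∀ e ∈ Esub g p q, InGAlg g p q 𝔥 (wedge g p e) := by
    intro e he
    exact ⟨0, zero_mem 𝔥, e, he, (zero_add _).symm⟩
  have brack : ∀ (e : V) (A : Module.End ℝ V), A p = 0 →
      (∀ a b, g (A a) b = - g a (A b)) →
      ⁅wedge g p e, A⁆ = - wedge g p (A e) := by
    intro e A hAp hAs
    apply LinearMap.ext; intro v
    have h1 : g p (A v) = 0 := by
      have h := hAs p v
      rw [hAp] at h
      simp at h
      linarith
    have h2 : g e (A v) = - g (A e) v := by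
      have h := hAs e v
      linarith
    simp only [Ring.lie_def, LinearMap.sub_apply, Module.End.mul_apply, wap,
      LinearMap.neg_apply, map_sub, map_smul]
    rw [h1, h2, hAp]
    module
  have ann : ∀ e ∈ Esub g p q, ∀ v₃ v₁ v₂ : V,
      ⁅wedge g p e, S v₃ v₁ v₂⁆ =
        S ((wedge g p e) v₃) v₁ v₂ + S v₃ ((wedge g p e) v₁) v₂
          + S v₃ v₁ ((wedge g p e) v₂) := by
    intro e he v₃ v₁ v₂
    have h := hann (wedge g p e) (WinG e he) v₁ v₂ v₃
    have h2 : ⁅wedge g p e, S v₃ v₁ v₂⁆ -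
        (S ((wedge g p e) v₃) v₁ v₂ + S v₃ ((wedge g p e) v₁) v₂
          + S v₃ v₁ ((wedge g p e) v₂)) = 0 := by
      rw [← h]; abel
    exact sub_eq_zero.mp h2
  -- ★1 : for z,x,y,e,f ∈ E, g (S_z(x,y) e) f = 0
  have star1 : ∀ z ∈ Esub g p q, ∀ x ∈ Esub g p q, ∀ y ∈ Esub g p q,
      ∀ e ∈ Esub g p q, ∀ f ∈ Esub g p q, g ((S z x y) e) f = 0 := by
    intro z hz x hx y hy e he f hf
    have h := ann e he z x y
    rw [Wx e he z hz, Wx e he x hx, Wx e he y hy,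
      brack e (S z x y) (val_p z x y) (val_skew z x y)] at h
    rw [Ssm1, Ssm2, Ssm3, Sp1, Sp2, Sp3] at h
    simp only [smul_zero, add_zero, neg_eq_zero] at h
    -- h : wedge g p ((S z x y) e) = 0
    have hq' := congrArg (fun (A : Module.End ℝ V) => A q) h
    simp only [wap, hpq, one_smul, LinearMap.zero_apply] at hq'
    -- hq' : (S z x y) e - g ((S z x y) e) q • p = 0
    have h2 : (S z x y) e = g ((S z x y) e) q • p := by
      have := sub_eq_zero.mp hq'
      exact this
    rw [h2, map_smul]
    simp [(memE f hf).1]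
  -- endomorphism identity from annihilation with (q, x, q)
  have eqII : ∀ e ∈ Esub g p q, ∀ x ∈ Esub g p q,
      S e x q = - wedge g p ((S q x q) e) - S q x e := by
    intro e he x hx
    have h := ann e he q x q
    rw [Wq e he, Wx e he x hx,
      brack e (S q x q) (val_p q x q) (val_skew q x q)] at h
    rw [Ssm2, Sp2] at h
    simp only [smul_zero, add_zero, zero_add] at h
    -- h : - wedge g p ((S q x q) e) = S e x q + S q x e
    rw [h]; abel
  -- ★2 and φ = ψ
  have key : ∀ z ∈ Esub g p q, ∀ x ∈ Esub g p q, ∀ y ∈ Esub g p q, ∀ w ∈ Esub g p q,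
      g ((S z x q) y) w = g ((S q z x) y) w := by
    intro z hz x hx y hy w hw
    have h := congrArg (fun (A : Module.End ℝ V) => g (A y) w) (eqII z hz x hx)
    simp only [LinearMap.sub_apply, LinearMap.neg_apply, map_sub, map_neg, wap,
      (memE y hy).1, zero_smul, zero_sub, map_smul, smul_eq_mul,
      (memE w hw).1, mul_zero, neg_neg, map_zero, LinearMap.smul_apply,
      smul_eq_mul, sub_zero, zero_sub] at h
    -- h : g ((S z x q) y) w = - g ((S q x z) y) w  (hopefully)
    rw [Sswap q x z] at h
    simp only [LinearMap.neg_apply, map_neg, LinearMap.neg_apply, neg_neg] at h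
    linarith [h]
  have psi0 : ∀ z ∈ Esub g p q, ∀ x ∈ Esub g p q, ∀ y ∈ Esub g p q, ∀ w ∈ Esub g p q,
      g ((S q z x) y) w = 0 := by
    intro z hz x hx y hy w hw
    have hb := congrArg (fun (A : Module.End ℝ V) => g (A y) w) (hB2 z x q)
    simp only [LinearMap.add_apply, map_add, LinearMap.zero_apply, map_zero] at hb
    -- hb : g ((S z x q) y) w + g ((S x q z) y) w + g ((S q z x) y) w = 0
    rw [Sswap x q z] at hb
    simp only [LinearMap.neg_apply, map_neg] at hb
    have k1 := key z hz x hx y hy w hw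
    have k2 := key x hx z hz y hy w hw
    have sk : g ((S q x z) y) w = - g ((S q z x) y) w := by
      rw [Sswap q x z]; simp
    linarith
  have phi0 : ∀ z ∈ Esub g p q, ∀ x ∈ Esub g p q, ∀ y ∈ Esub g p q, ∀ w ∈ Esub g p q,
      g ((S z x q) y) w = 0 := by
    intro z hz x hx y hy w hw
    rw [key z hz x hx y hy w hw]
    exact psi0 z hz x hx y hy w hw
  -- conversion: g((S s1 s2 s3) a) q = - g((S s1 s2 s3) q) a
  have convq : ∀ s₁ s₂ s₃ a : V, g ((S s₁ s₂ s₃) a) q = - g ((S s₁ s₂ s₃) q) a := by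
    intro s₁ s₂ s₃ a
    rw [val_skew s₁ s₂ s₃ a q, hsymm a ((S s₁ s₂ s₃) q)]
  have beta_skew : ∀ u v a : V, g ((S q u v) q) a = - g ((S q v u) q) a := by
    intro u v a
    rw [Sswap q u v]
    simp
  have beta_cyc : ∀ z x y : V,
      g ((S q z x) q) y + g ((S q x y) q) z + g ((S q y z) q) x = 0 := by
    intro z x y
    have h := congrArg (fun v => g v q) (hB1 q z x y)
    simp only [map_add, LinearMap.add_apply, map_zero, LinearMap.zero_apply] at h
    rw [convq q z x y, convq q x y z, convq q y z x] at h
    linarith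
  have star5 : ∀ z x y : V,
      g ((S z x q) q) y - g ((S x z q) q) y + g ((S q z x) q) y = 0 := by
    intro z x y
    have h := congrArg (fun (A : Module.End ℝ V) => g (A q) y) (hB2 z x q)
    simp only [LinearMap.add_apply, map_add, LinearMap.zero_apply, map_zero] at h
    rw [Sswap x q z] at h
    simp only [LinearMap.neg_apply, map_neg] at h
    linarith
  have star7 : ∀ x e y : V, g ((S q x q) e) y = - g ((S q e y) q) x := by
    intro x e y
    have h1 := pair q x q e y
    have h2 := convq q e y x
    linarith
  have star6 : ∀ e ∈ Esub g p q, ∀ x ∈ Esub g p q, ∀ y ∈ Esub g p q,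
      g ((S e x q) q) y = g ((S q e y) q) x - g ((S q x e) q) y := by
    intro e he x hx y hy
    have h := congrArg (fun (A : Module.End ℝ V) => g (A q) y) (eqII e he x hx)
    simp only [LinearMap.sub_apply, LinearMap.neg_apply, map_sub, map_neg, wap,
      hpq, one_smul, map_smul, LinearMap.smul_apply, smul_eq_mul,
      (memE y hy).1, mul_zero, sub_zero] at h
    -- h : g((S e x q) q) y = -(g ((S q x q) e) y) - g ((S q x e) q) y
    rw [star7 x e y] at h
    linarith
  have beta0 : ∀ z ∈ Esub g p q, ∀ x ∈ Esub g p q, ∀ y ∈ Esub g p q,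
      g ((S q z x) q) y = 0 := by
    intro z hz x hx y hy
    have a1 := star6 z hz x hx y hy
    have a2 := star6 x hx z hz y hy
    have s5 := star5 z x y
    have c1 := beta_cyc z x y
    have sk1 : g ((S q z y) q) x = - g ((S q y z) q) x := beta_skew z y x
    have sk2 : g ((S q x z) q) y = - g ((S q z x) q) y := beta_skew x z y
    linarith
  have alpha0 : ∀ z ∈ Esub g p q, ∀ x ∈ Esub g p q, ∀ y ∈ Esub g p q,
      g ((S z x q) q) y = 0 := by
    intro z hz x hx y hy
    rw [star6 z hz x hx y hy, beta0 z hz y hy x hx, beta0 x hx z hz y hy]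
    ring
  have perpE_zero : ∀ v ∈ Esub g p q, (∀ y ∈ Esub g p q, g v y = 0) → v = 0 := by
    intro v hv h
    by_contra hne
    have h1 := hEpos v hv hne
    have h2 := h v hv
    linarith
  have Szxq_q : ∀ z ∈ Esub g p q, ∀ x ∈ Esub g p q, (S z x q) q = 0 := by
    intro z hz x hx
    exact perpE_zero _ (val_qmem z x q) (fun y hy => alpha0 z hz x hx y hy)
  have vanish : ∀ v : V, g v p = 0 → g v q = 0 → (∀ f ∈ Esub g p q, g v f = 0) → v = 0 := by
    intro v h1 h2 h3
    apply hnondeg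
    intro y
    obtain ⟨α, β, f, hf, hy⟩ := hdecomp y
    rw [hy]
    simp [map_add, map_smul, h1, h2, h3 f hf]
  have Szxq0 : ∀ z ∈ Esub g p q, ∀ x ∈ Esub g p q, S z x q = 0 := by
    intro z hz x hx
    apply LinearMap.ext; intro u
    obtain ⟨α, β, f, hf, hu⟩ := hdecomp u
    rw [hu]
    simp only [map_add, map_smul, LinearMap.zero_apply]
    have hfe : (S z x q) f = 0 := by
      apply vanish
      · rw [val_skew z x q f p, val_p z x q]
        simp
      · rw [val_skew z x q f q, Szxq_q z hz x hx]
        simp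
      · intro f' hf'
        exact phi0 z hz x hx f hf f' hf'
    rw [val_p z x q, hfe, Szxq_q z hz x hx]
  have Szxyq : ∀ z ∈ Esub g p q, ∀ x ∈ Esub g p q, ∀ y ∈ Esub g p q,
      (S z x y) q = 0 := by
    intro z hz x hx y hy
    apply perpE_zero _ (val_qmem z x y)
    intro f hf
    have h1 : g ((S z x y) q) f = - g ((S z x y) f) q := by
      rw [val_skew z x y q f, hsymm q ((S z x y) f)]
    rw [h1, pair z x y f q, Szxq0 z hz f hf]
    simp
  have SzxyE : ∀ z ∈ Esub g p q, ∀ x ∈ Esub g p q, ∀ y ∈ Esub g p q,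
      ∀ e ∈ Esub g p q, (S z x y) e = 0 := by
    intro z hz x hx y hy e he
    apply vanish
    · rw [val_skew z x y e p, val_p z x y]
      simp
    · rw [val_skew z x y e q, Szxyq z hz x hx y hy]
      simp
    · intro f hf
      exact star1 z hz x hx y hy e he f hf
  have Szxy0 : ∀ z ∈ Esub g p q, ∀ x ∈ Esub g p q, ∀ y ∈ Esub g p q,
      S z x y = 0 := by
    intro z hz x hx y hy
    apply LinearMap.ext; intro u
    obtain ⟨α, β, f, hf, hu⟩ := hdecomp u
    rw [hu]
    simp only [map_add, map_smul, LinearMap.zero_apply]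
    rw [val_p z x y, SzxyE z hz x hx y hy f hf, Szxyq z hz x hx y hy]
  have final : ∀ z ∈ Esub g p q, ∀ v w : V, S z v w = 0 := by
    intro z hz v w
    have h2 : ∀ w' : V, S z q w' = 0 := by
      intro w'
      obtain ⟨α, β, f, hf, hw'⟩ := hdecomp w'
      rw [hw', Sad3, Sad3, Ssm3, Ssm3, Sp3, hSalt]
      have hfz : S z q f = 0 := by
        rw [Sswap z q f, Szxq0 z hz f hf, neg_zero]
      rw [hfz]
      simp
    obtain ⟨α, β, e, he, hv⟩ := hdecomp v
    have h1 : ∀ w' : V, S z e w' = 0 := by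
      intro w'
      obtain ⟨α', β', f, hf, hw'⟩ := hdecomp w'
      rw [hw', Sad3, Sad3, Ssm3, Ssm3, Sp3, Szxy0 z hz e he f hf,
        Szxq0 z hz e he]
      simp
    rw [hv, Sad2, Sad2, Ssm2, Ssm2, Sp2, h1, h2]
    simp
  exact ⟨Sp1, fun x hx v w => final x hx v w⟩
end

section
/- Let V be a Lorentzian vector space of dimension d = n+2 ≥ 3, with null p, q, g(p,q)=1, E = span{p,q}^⊥, and orthonormal basis e₁,…,eₙ of E. For R^{Id_E} as above, the Ricci contraction Ric(u₂) = Σ_{a,b} g^{ab} R^{Id_E}(u₂, X_a) X_b (with X₀ = p, X_{n+1} = q, X_i = e_i) equals (2 − d)·g(p, u₂)·p for all u₂ ∈ V. -/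
/-- The curvature tensor `R^{Id_E}(u,v) = p ∧ ((u∧v)p)`. -/
def RId {V : Type*} [AddCommGroup V] [Module ℝ V]
    (g : LinearMap.BilinForm ℝ V) (p : V) (u v : V) : Module.End ℝ V :=
  wedge g p ((wedge g u v) p)

/-- In a Lorentzian vector space of dimension `d = n + 2 ≥ 3` with
null vectors `p, q`, `g(p,q) = 1`, and orthonormal basis `e₁,…,eₙ` of
`E = span{p,q}^⊥`, the Ricci contraction of `R^{Id_E}`,
`Ric(u₂) = Σ_{a,b} g^{ab} R^{Id_E}(u₂, X_a) X_b
        = R^{Id_E}(u₂,p) q + R^{Id_E}(u₂,q) p + Σ_i R^{Id_E}(u₂,e_i) e_i`,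
equals `(2 − d)·g(p,u₂)·p` for all `u₂ ∈ V`. -/
theorem stmt_12 {n : ℕ} (hn : 1 ≤ n)
    {V : Type*} [AddCommGroup V] [Module ℝ V] [FiniteDimensional ℝ V]
    (hdim : Module.finrank ℝ V = n + 2)
    (g : LinearMap.BilinForm ℝ V) (hsymm : ∀ x y : V, g x y = g y x)
    (p q : V) (hp : g p p = 0) (hq : g q q = 0) (hpq : g p q = 1)
    (e : Fin n → V)
    (hep : ∀ i, g p (e i) = 0) (heq : ∀ i, g q (e i) = 0)
    (hee : ∀ i j, g (e i) (e j) = if i = j then 1 else 0) :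
    ∀ u₂ : V,
      (RId g p u₂ p) q + (RId g p u₂ q) p + ∑ i, (RId g p u₂ (e i)) (e i)
        = ((2 : ℝ) - ((n : ℝ) + 2)) • ((g p u₂) • p) := by
  intro u₂
  have hqp : g q p = 1 := by rw [hsymm]; exact hpq
  have heip : ∀ i, g (e i) p = 0 := fun i => by rw [hsymm]; exact hep i
  have hup : g u₂ p = g p u₂ := hsymm u₂ p
  have t1 : (RId g p u₂ p) q = 0 := by
    simp [RId, wedge, hp, hpq, hqp, hup, smul_smul]
  have t2 : (RId g p u₂ q) p = 0 := by
    simp [RId, wedge, hp, hqp, hup, map_sub, map_smul, smul_smul]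
  have t3 : ∀ i, (RId g p u₂ (e i)) (e i) = -((g p u₂) • p) := by
    intro i
    simp [RId, wedge, hep, heip, hee, hup, map_sub, map_smul, smul_smul]
  rw [t1, t2, Finset.sum_congr rfl (fun i _ => t3 i)]
  simp [Finset.sum_const, sub_smul, add_smul]
  module
end

section
/- Let H : ℝⁿ × ℝ → ℝ be smooth, written H(x, u). The third-order partial derivatives ∂³H/∂xⁱ∂xʲ∂xᵏ and ∂³H/∂xⁱ∂xʲ∂u all vanish identically if and only if H has the form H(x,u) = Σ_{i,j} H_{ij} xⁱ xʲ + Σ_i G_i(u) xⁱ + K(u) with H_{ij} a constant symmetric matrix and G_i, K smooth functions of u. -/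
section helpers
variable {E : Type*} [NormedAddCommGroup E] [NormedSpace ℝ E]
variable {F : Type*} [NormedAddCommGroup F] [NormedSpace ℝ F]

lemma evalDeriv {g : E → E →L[ℝ] F} {z : E} (hg : DifferentiableAt ℝ g z) (c b : E) :
    fderiv ℝ (fun w => g w c) z b = fderiv ℝ g z b c := by
  rw [fderiv_clm_apply hg (differentiableAt_const c)]
  simp

lemma iteratedFDeriv_three_apply {H : E → F} (z a b c : E) :
    iteratedFDeriv ℝ 3 H z ![a, b, c] =
      fderiv ℝ (fderiv ℝ (fderiv ℝ H)) z a b c := by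
  rw [iteratedFDeriv_succ_apply_right, iteratedFDeriv_two_apply]
  rfl

end helpers

set_option maxHeartbeats 2000000 in
/-- For a smooth `H : ℝⁿ × ℝ → ℝ`, all third-order partial
derivatives with at least two spatial (`x`) directions (i.e. `∂³H/∂xⁱ∂xʲ∂xᵏ`
and `∂³H/∂xⁱ∂xʲ∂u`) vanish identically if and only if
`H(x,u) = Σ_{i,j} H_{ij} xⁱ xʲ + Σ_i G_i(u) xⁱ + K(u)` with `H_{ij}` a constant
symmetric matrix and `G_i`, `K` smooth functions of `u`. -/
theorem stmt_15 {n : ℕ} (H : (Fin n → ℝ) × ℝ → ℝ)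
    (hH : ContDiff ℝ (⊤ : ℕ∞) H) :
    (∀ (z : (Fin n → ℝ) × ℝ) (v₁ v₂ v₃ : (Fin n → ℝ) × ℝ),
        v₁.2 = 0 → v₂.2 = 0 → iteratedFDeriv ℝ 3 H z ![v₁, v₂, v₃] = 0) ↔
    (∃ Hm : Matrix (Fin n) (Fin n) ℝ, Hm.IsSymm ∧
      ∃ G : Fin n → ℝ → ℝ, ∃ K : ℝ → ℝ,
        (∀ i, ContDiff ℝ (⊤ : ℕ∞) (G i)) ∧ ContDiff ℝ (⊤ : ℕ∞) K ∧
        ∀ (x : Fin n → ℝ) (u : ℝ),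
          H (x, u) = (∑ i, ∑ j, Hm i j * x i * x j) + (∑ i, G i u * x i) + K u) := by
  classical
  have h1top : (1 : WithTop ℕ∞) ≤ ((⊤ : ℕ∞) : WithTop ℕ∞) := by exact_mod_cast le_top
  have h2top : (2 : WithTop ℕ∞) ≤ ((⊤ : ℕ∞) : WithTop ℕ∞) := WithTop.coe_le_coe.mpr le_top
  set F := fderiv ℝ H with hFdef
  set S := fderiv ℝ F with hSdef
  have hFsm : ContDiff ℝ (⊤ : ℕ∞) F := hH.fderiv_right (by exact_mod_cast le_top)
  have hSsm : ContDiff ℝ (⊤ : ℕ∞) S := hFsm.fderiv_right (by exact_mod_cast le_top)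
  have hHd : Differentiable ℝ H := hH.differentiable (by simp)
  have hFd : Differentiable ℝ F := hFsm.differentiable (by simp)
  have hSd : Differentiable ℝ S := hSsm.differentiable (by simp)
  have symS : ∀ (z b c : (Fin n → ℝ) × ℝ), S z b c = S z c b := fun z b c =>
    (hH.contDiffAt.isSymmSndFDerivAt (by rw [minSmoothness_of_isRCLikeNormedField]; exact h2top)) b c
  have evS : ∀ (z b c : (Fin n → ℝ) × ℝ), fderiv ℝ (fun w => F w c) z b = S z b c := by
    intro z b c
    exact evalDeriv (hFd z) c b
  have evT : ∀ (z a b c : (Fin n → ℝ) × ℝ),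
      fderiv ℝ (fun w => S w b c) z a = fderiv ℝ S z a b c := by
    intro z a b c
    have hg : DifferentiableAt ℝ (fun w => S w b) z :=
      (hSd z).clm_apply (differentiableAt_const b)
    rw [show (fun w => S w b c) = fun w => (fun w' => S w' b) w c from rfl,
      evalDeriv hg c a, evalDeriv (hSd z) b a]
  have bridge : ∀ (z a b c : (Fin n → ℝ) × ℝ),
      iteratedFDeriv ℝ 3 H z ![a, b, c] = fderiv ℝ S z a b c := fun z a b c =>
    iteratedFDeriv_three_apply z a b c
  have sym_ab : ∀ (z a b c : (Fin n → ℝ) × ℝ), fderiv ℝ S z a b c = fderiv ℝ S z b a c := by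
    intro z a b c
    have hFc : ContDiff ℝ (⊤ : ℕ∞) (fun y => F y c) := hFsm.clm_apply contDiff_const
    have hFcd' : Differentiable ℝ (fderiv ℝ (fun y => F y c)) :=
      (hFc.fderiv_right (m := ((⊤ : ℕ∞) : WithTop ℕ∞)) (by exact_mod_cast le_top)).differentiable (by simp)
    have key : ∀ a' b' : (Fin n → ℝ) × ℝ,
        fderiv ℝ (fderiv ℝ (fun y => F y c)) z a' b' = fderiv ℝ S z a' b' c := by
      intro a' b'
      rw [← evalDeriv (hFcd' z) b' a', ← evT z a' b' c]
      have he : (fun w => fderiv ℝ (fun y => F y c) w b') = fun w => S w b' c :=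
        funext fun w => evS w b' c
      rw [he]
    rw [← key a b, ← key b a]
    exact (hFc.contDiffAt.isSymmSndFDerivAt (by rw [minSmoothness_of_isRCLikeNormedField]; exact h2top)) a b
  have sym_bc : ∀ (z a b c : (Fin n → ℝ) × ℝ), fderiv ℝ S z a b c = fderiv ℝ S z a c b := by
    intro z a b c
    rw [← evT z a b c, ← evT z a c b]
    have he : (fun w => S w b c) = fun w => S w c b := funext fun w => symS w b c
    rw [he]
  constructor
  · intro hyp
    have hyp2 : ∀ (z a b c : (Fin n → ℝ) × ℝ), b.2 = 0 → c.2 = 0 →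
        fderiv ℝ S z a b c = 0 := by
      intro z a b c hb hc
      rw [sym_ab z a b c, sym_bc z b a c, ← bridge z b c a]
      exact hyp z b c a hb hc
    have Sconst : ∀ (b c : (Fin n → ℝ) × ℝ), b.2 = 0 → c.2 = 0 → ∀ z, S z b c = S 0 b c := by
      intro b c hb hc z
      have hdiff : Differentiable ℝ (fun w => S w b c) := fun w =>
        ((hSd w).clm_apply (differentiableAt_const b)).clm_apply (differentiableAt_const c)
      refine is_const_of_fderiv_eq_zero hdiff (fun w => ?_) z 0
      refine ContinuousLinearMap.ext fun a => ?_
      rw [ContinuousLinearMap.zero_apply, evT w a b c]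
      exact hyp2 w a b c hb hc
    have key : ∀ (x : Fin n → ℝ) (u : ℝ),
        H (x, u) = H (0, u) + F (0, u) (x, 0) + S 0 (x, 0) (x, 0) / 2 := by
      intro x u
      set γ : ℝ → (Fin n → ℝ) × ℝ := fun t => (t • x, u) with hγ
      have hγd : ∀ t, HasDerivAt γ ((x, 0) : (Fin n → ℝ) × ℝ) t := by
        intro t
        have h1 : HasDerivAt (fun t : ℝ => t • x) x t := by
          simpa using (hasDerivAt_id t).smul_const x
        exact h1.prodMk (hasDerivAt_const t u)
      have hSc : ∀ z, S z (x, 0) (x, 0) = S 0 (x, 0) (x, 0) := fun z =>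
        Sconst (x, 0) (x, 0) rfl rfl z
      have hχ : ∀ t, HasDerivAt (fun s => F (γ s) (x, 0)) (S 0 (x, 0) (x, 0)) t := by
        intro t
        have hd1 : DifferentiableAt ℝ (fun w => F w (x, 0)) (γ t) :=
          (hFd (γ t)).clm_apply (differentiableAt_const _)
        have h2 := hd1.hasFDerivAt.comp_hasDerivAt t (hγd t)
        have h3 : fderiv ℝ (fun w => F w (x, 0)) (γ t) (x, 0) = S 0 (x, 0) (x, 0) := by
          rw [evS (γ t) (x, 0) (x, 0), hSc]
        rw [← h3]
        exact h2
      have hχval : ∀ t, F (γ t) (x, 0) = F (γ 0) (x, 0) + t * S 0 (x, 0) (x, 0) := by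
        intro t
        have hd : ∀ s, HasDerivAt (fun r => F (γ r) (x, 0) - r * S 0 (x, 0) (x, 0)) 0 s := by
          intro s
          have h4 := (hχ s).sub ((hasDerivAt_id s).mul_const (S 0 (x, 0) (x, 0)))
          exact h4.congr_deriv (by ring)
        have hcst := is_const_of_deriv_eq_zero
          (fun s => (hd s).differentiableAt) (fun s => (hd s).deriv) t 0
        simp only [zero_mul, sub_zero] at hcst
        linarith [hcst]
      have hψ : ∀ t, HasDerivAt (fun s => H (γ s)) (F (γ t) (x, 0)) t := fun t =>
        (hHd (γ t)).hasFDerivAt.comp_hasDerivAt t (hγd t)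
      have hρ : ∀ t, HasDerivAt
          (fun r => H (γ r) - r * F (γ 0) (x, 0) - r ^ 2 * (S 0 (x, 0) (x, 0) / 2)) 0 t := by
        intro t
        have h5 := ((hψ t).sub ((hasDerivAt_id t).mul_const (F (γ 0) (x, 0)))).sub
          ((hasDerivAt_pow 2 t).mul_const (S 0 (x, 0) (x, 0) / 2))
        exact h5.congr_deriv (by
          rw [hχval t]
          push_cast
          ring)
      have h10 := is_const_of_deriv_eq_zero (fun s => (hρ s).differentiableAt)
        (fun s => (hρ s).deriv) 1 0
      have hγ1 : γ 1 = (x, u) := by simp [hγ]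
      have hγ0 : γ 0 = ((0 : Fin n → ℝ), u) := by simp [hγ]
      rw [hγ1, hγ0] at h10
      norm_num at h10
      linarith [h10]
    set e : Fin n → (Fin n → ℝ) × ℝ := fun i => (Pi.single i 1, 0) with he
    have hxsum : ∀ x : Fin n → ℝ, ((x, 0) : (Fin n → ℝ) × ℝ) = ∑ i, x i • e i := by
      intro x
      rw [Prod.ext_iff]
      constructor
      · rw [Prod.fst_sum]
        funext j
        simp [he, Finset.sum_apply, Pi.single_apply, mul_ite, Finset.sum_ite_eq]
      · rw [Prod.snd_sum]
        simp [he]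
    have hlin : ∀ (u : ℝ) (x : Fin n → ℝ),
        F ((0 : Fin n → ℝ), u) (x, 0) = ∑ i, x i * F ((0 : Fin n → ℝ), u) (e i) := by
      intro u x
      conv_lhs => rw [hxsum x]
      rw [map_sum]
      exact Finset.sum_congr rfl fun i _ => by rw [map_smul, smul_eq_mul]
    have hquad : ∀ x : Fin n → ℝ,
        S 0 (x, 0) (x, 0) = ∑ i, ∑ j, x i * x j * S 0 (e i) (e j) := by
      intro x
      have hone : S 0 (x, 0) = ∑ i, x i • S 0 (e i) := by
        conv_lhs => rw [hxsum x]
        rw [map_sum]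
        exact Finset.sum_congr rfl fun i _ => by rw [map_smul]
      rw [hone, ContinuousLinearMap.sum_apply]
      refine Finset.sum_congr rfl fun i _ => ?_
      rw [ContinuousLinearMap.smul_apply]
      conv_lhs => rw [hxsum x]
      rw [map_sum, Finset.smul_sum]
      refine Finset.sum_congr rfl fun j _ => ?_
      rw [map_smul]
      simp only [smul_eq_mul]
      ring
    refine ⟨fun i j => S 0 (e i) (e j) / 2, ?_, fun i u => F ((0 : Fin n → ℝ), u) (e i),
      fun u => H ((0 : Fin n → ℝ), u), ?_, ?_, ?_⟩
    · show Matrix.transpose _ = _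
      ext i j
      show S 0 (e j) (e i) / 2 = S 0 (e i) (e j) / 2
      rw [symS 0 (e j) (e i)]
    · intro i
      exact (hFsm.comp (contDiff_const.prodMk contDiff_id)).clm_apply contDiff_const
    · exact hH.comp (contDiff_const.prodMk contDiff_id)
    · intro x u
      rw [key x u, hlin u x, hquad x, Finset.sum_div]
      have e1 : ∀ i, (∑ j, x i * x j * S 0 (e i) (e j)) / 2 =
          ∑ j, S 0 (e i) (e j) / 2 * x i * x j := by
        intro i
        rw [Finset.sum_div]
        exact Finset.sum_congr rfl fun j _ => by ring
      rw [Finset.sum_congr rfl fun i _ => e1 i]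
      have e2 : (∑ i, x i * F ((0 : Fin n → ℝ), u) (e i)) =
          ∑ i, F ((0 : Fin n → ℝ), u) (e i) * x i :=
        Finset.sum_congr rfl fun i _ => mul_comm _ _
      rw [e2]
      ring
  · rintro ⟨Hm, _, G, K, hG, hK, hform⟩ z v₁ v₂ v₃ hv1 hv2
    rw [bridge]
    have hHfun : H = fun w => (∑ i, ∑ j, Hm i j * w.1 i * w.1 j) +
        (∑ i, G i w.2 * w.1 i) + K w.2 := by
      funext w
      conv_lhs => rw [← Prod.mk.eta (p := w)]
      exact hform w.1 w.2
    set P : Fin n → ((Fin n → ℝ) × ℝ) →L[ℝ] ℝ :=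
      fun i => (ContinuousLinearMap.proj i).comp (ContinuousLinearMap.fst ℝ (Fin n → ℝ) ℝ)
      with hP
    set Pu : ((Fin n → ℝ) × ℝ) →L[ℝ] ℝ := ContinuousLinearMap.snd ℝ (Fin n → ℝ) ℝ with hPu
    have hPd : ∀ (i) (y : (Fin n → ℝ) × ℝ),
        HasFDerivAt (fun w : (Fin n → ℝ) × ℝ => w.1 i) (P i) y := fun i y =>
      (P i).hasFDerivAt
    have hPud : ∀ y : (Fin n → ℝ) × ℝ,
        HasFDerivAt (fun w : (Fin n → ℝ) × ℝ => w.2) Pu y := fun y => Pu.hasFDerivAt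
    have hGd : ∀ (i) (t : ℝ), HasDerivAt (G i) (deriv (G i) t) t := fun i t =>
      ((hG i).differentiable (by simp) t).hasDerivAt
    have hGsm : ∀ i, ContDiff ℝ (⊤ : ℕ∞) (deriv (G i)) := fun i =>
      (contDiff_infty_iff_deriv.mp (hG i)).2
    have hGd2 : ∀ (i) (t : ℝ), HasDerivAt (deriv (G i)) (deriv (deriv (G i)) t) t := fun i t =>
      ((hGsm i).differentiable (by simp) t).hasDerivAt
    have hKd : ∀ t : ℝ, HasDerivAt K (deriv K t) t := fun t =>
      (hK.differentiable (by simp) t).hasDerivAt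
    have hKsm : ContDiff ℝ (⊤ : ℕ∞) (deriv K) := (contDiff_infty_iff_deriv.mp hK).2
    have hKd2 : ∀ t : ℝ, HasDerivAt (deriv K) (deriv (deriv K) t) t := fun t =>
      (hKsm.differentiable (by simp) t).hasDerivAt
    have hGc : ∀ (i) (y : (Fin n → ℝ) × ℝ),
        HasFDerivAt (fun w : (Fin n → ℝ) × ℝ => G i w.2) (deriv (G i) y.2 • Pu) y := by
      intro i y
      simpa [Function.comp_def] using (hGd i y.2).comp_hasFDerivAt y (hPud y)
    have hGc2 : ∀ (i) (y : (Fin n → ℝ) × ℝ),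
        HasFDerivAt (fun w : (Fin n → ℝ) × ℝ => deriv (G i) w.2)
          (deriv (deriv (G i)) y.2 • Pu) y := by
      intro i y
      simpa [Function.comp_def] using (hGd2 i y.2).comp_hasFDerivAt y (hPud y)
    have hKc : ∀ y : (Fin n → ℝ) × ℝ,
        HasFDerivAt (fun w : (Fin n → ℝ) × ℝ => K w.2) (deriv K y.2 • Pu) y := by
      intro y
      simpa [Function.comp_def] using (hKd y.2).comp_hasFDerivAt y (hPud y)
    have hKc2 : ∀ y : (Fin n → ℝ) × ℝ,
        HasFDerivAt (fun w : (Fin n → ℝ) × ℝ => deriv K w.2)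
          (deriv (deriv K) y.2 • Pu) y := by
      intro y
      simpa [Function.comp_def] using (hKd2 y.2).comp_hasFDerivAt y (hPud y)
    have hstep1 : ∀ y : (Fin n → ℝ) × ℝ, HasFDerivAt H
        (((∑ i, ∑ j, ((Hm i j * y.1 i) • P j + y.1 j • (Hm i j • P i))) +
          (∑ i, (G i y.2 • P i + y.1 i • (deriv (G i) y.2 • Pu)))) + deriv K y.2 • Pu) y := by
      intro y
      rw [hHfun]
      refine HasFDerivAt.add (HasFDerivAt.add ?_ ?_) (hKc y)
      · exact HasFDerivAt.fun_sum fun i _ => HasFDerivAt.fun_sum fun j _ =>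
          ((hPd i y).const_mul (Hm i j)).mul (hPd j y)
      · exact HasFDerivAt.fun_sum fun i _ => (hGc i y).mul (hPd i y)
    have hF1 : ∀ y : (Fin n → ℝ) × ℝ, F y =
        ((∑ i, ∑ j, ((Hm i j * y.1 i) • P j + y.1 j • (Hm i j • P i))) +
          (∑ i, (G i y.2 • P i + y.1 i • (deriv (G i) y.2 • Pu)))) + deriv K y.2 • Pu := by
      intro y
      rw [hFdef]
      exact (hstep1 y).fderiv
    have hFapp : ∀ y : (Fin n → ℝ) × ℝ, F y v₃ =
        ((∑ i, ∑ j, (Hm i j * y.1 i * v₃.1 j + y.1 j * (Hm i j * v₃.1 i))) +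
          (∑ i, (G i y.2 * v₃.1 i + y.1 i * (deriv (G i) y.2 * v₃.2)))) +
          deriv K y.2 * v₃.2 := by
      intro y
      rw [hF1 y]
      simp [ContinuousLinearMap.sum_apply, hP, hPu, mul_assoc]
    have hstep2 : ∀ w : (Fin n → ℝ) × ℝ, HasFDerivAt (fun y => F y v₃)
        ((((∑ i, ∑ j, (v₃.1 j • (Hm i j • P i) + (Hm i j * v₃.1 i) • P j)) +
          (∑ i, (v₃.1 i • (deriv (G i) w.2 • Pu) +
            (w.1 i • (v₃.2 • (deriv (deriv (G i)) w.2 • Pu)) +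
              (deriv (G i) w.2 * v₃.2) • P i)))) +
          v₃.2 • (deriv (deriv K) w.2 • Pu))) w := by
      intro w
      rw [show (fun y => F y v₃) = fun y =>
        ((∑ i, ∑ j, (Hm i j * y.1 i * v₃.1 j + y.1 j * (Hm i j * v₃.1 i))) +
          (∑ i, (G i y.2 * v₃.1 i + y.1 i * (deriv (G i) y.2 * v₃.2)))) +
          deriv K y.2 * v₃.2 from funext hFapp]
      refine HasFDerivAt.add (HasFDerivAt.add ?_ ?_) ((hKc2 w).mul_const v₃.2)
      · exact HasFDerivAt.fun_sum fun i _ => HasFDerivAt.fun_sum fun j _ =>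
          (((hPd i w).const_mul (Hm i j)).mul_const (v₃.1 j)).add
            ((hPd j w).mul_const (Hm i j * v₃.1 i))
      · exact HasFDerivAt.fun_sum fun i _ =>
          ((hGc i w).mul_const (v₃.1 i)).add
            ((hPd i w).mul ((hGc2 i w).mul_const v₃.2))
    have hN : ∀ w : (Fin n → ℝ) × ℝ, fderiv ℝ (fun y => F y v₃) w v₂ =
        (∑ i, ∑ j, (v₃.1 j * (Hm i j * v₂.1 i) + Hm i j * v₃.1 i * v₂.1 j)) +
          ∑ i, deriv (G i) w.2 * v₃.2 * v₂.1 i := by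
      intro w
      rw [(hstep2 w).fderiv]
      simp [ContinuousLinearMap.sum_apply, hP, hPu, hv2, mul_assoc]
    rw [← evT z v₁ v₂ v₃]
    have hSfun : (fun w => S w v₂ v₃) = fun w : (Fin n → ℝ) × ℝ =>
        ((∑ i, ∑ j, (v₃.1 j * (Hm i j * v₂.1 i) + Hm i j * v₃.1 i * v₂.1 j)) +
          ∑ i, deriv (G i) w.2 * v₃.2 * v₂.1 i) := by
      funext w
      rw [← evS w v₂ v₃]
      exact hN w
    rw [hSfun]
    have hfin : HasFDerivAt (fun w : (Fin n → ℝ) × ℝ =>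
        ((∑ i, ∑ j, (v₃.1 j * (Hm i j * v₂.1 i) + Hm i j * v₃.1 i * v₂.1 j)) +
          ∑ i, deriv (G i) w.2 * v₃.2 * v₂.1 i))
        ((0 : ((Fin n → ℝ) × ℝ) →L[ℝ] ℝ) +
          ∑ i, v₂.1 i • ((v₃.2 • (deriv (deriv (G i)) z.2 • Pu)))) z := by
      refine (hasFDerivAt_const _ z).add (HasFDerivAt.fun_sum fun i _ => ?_)
      exact ((hGc2 i z).mul_const v₃.2).mul_const (v₂.1 i)
    rw [hfin.fderiv]
    simp [ContinuousLinearMap.sum_apply, hPu, hv1]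
end
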